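/- Let M be a parametric N-quasiseparable L×L real matrix with diagonal parameters δ_0,…,δ_{L−1}, and let D = diag(δ_0,…,δ_{L−1}). Then there exist parameter families (A'_t, b'_t, c'_t) and (A''_t, b''_t, c''_t) in ℝ^{N×N} × ℝ^N × ℝ^N (t = 0,…,L−1) such that, denoting by S_f and S_b the corresponding parametric N-semiseparable matrices, M = Shift · S_f + J · Shift · S_b · J + D. Equivalently, for every x ∈ ℝ^L, M x = shift(S_f x) + flip(shift(S_b(flip x))) + D x: the action of a quasiseparable matrix decomposes into two semiseparable (state space) passes, one forward and one on the reversed sequence, combined with shifts, flips, and a diagonal term. -/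

import Mathlib

open Matrix

/-- `Aprod A i j = A i * A (i-1) * ⋯ * A (j+1)`, the ordered product `A^×_{i:j}`;
it equals the identity when `i = j` (and also, by convention, when `i < j`). -/
def Aprod {N : ℕ} (A : ℕ → Matrix (Fin N) (Fin N) ℝ) : ℕ → ℕ → Matrix (Fin N) (Fin N) ℝ
  | 0, _ => 1
  | i + 1, j => if j ≤ i then A (i + 1) * Aprod A i j else 1

/-- The parametric `N`-semiseparable `L × L` matrix with parameters `A, b, c`:
`S i j = cᵢᵀ A^×_{i:j} bⱼ` for `i ≥ j` and `0` for `i < j`. -/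
def semisep (L : ℕ) {N : ℕ} (A : ℕ → Matrix (Fin N) (Fin N) ℝ)
    (b c : ℕ → Fin N → ℝ) : Matrix (Fin L) (Fin L) ℝ :=
  Matrix.of fun i j =>
    if (j : ℕ) ≤ (i : ℕ) then c (i : ℕ) ⬝ᵥ (Aprod A (i : ℕ) (j : ℕ)) *ᵥ b (j : ℕ) else 0
/-- The parametric `N`-quasiseparable `L × L` matrix with forward parameters `Af, bf, cf`,
backward parameters `Ab, bb, cb`, and diagonal parameters `δ`. -/
def quasisep (L : ℕ) {N : ℕ} (Af : ℕ → Matrix (Fin N) (Fin N) ℝ) (bf cf : ℕ → Fin N → ℝ)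
    (Ab : ℕ → Matrix (Fin N) (Fin N) ℝ) (bb cb : ℕ → Fin N → ℝ) (δ : ℕ → ℝ) :
    Matrix (Fin L) (Fin L) ℝ :=
  Matrix.of fun i j =>
    if (j : ℕ) < (i : ℕ) then cf (i : ℕ) ⬝ᵥ (Aprod Af (i : ℕ) (j : ℕ)) *ᵥ bf (j : ℕ)
    else if (i : ℕ) = (j : ℕ) then δ (i : ℕ)
    else cb (j : ℕ) ⬝ᵥ (Aprod Ab (j : ℕ) (i : ℕ)) *ᵥ bb (i : ℕ)

/-- The `L × L` down-shift matrix: `Shift i j = 1` iff `i = j + 1`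
(so `(Shift *ᵥ x) t = x (t-1)` with zero at `t = 0`). -/
def shiftM (L : ℕ) : Matrix (Fin L) (Fin L) ℝ :=
  Matrix.of fun i j => if (i : ℕ) = (j : ℕ) + 1 then 1 else 0

/-- The `L × L` exchange matrix: `J i j = 1` iff `i + j = L - 1`
(so `J *ᵥ x` reverses `x`). -/
def exchJ (L : ℕ) : Matrix (Fin L) (Fin L) ℝ :=
  Matrix.of fun i j => if (i : ℕ) + (j : ℕ) = L - 1 then 1 else 0

/-- Right-shift of a sequence by one position, padding with zero at the beginning. -/
def shiftVec {L : ℕ} (x : Fin L → ℝ) : Fin L → ℝ := fun i =>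
  if 0 < (i : ℕ) then x ⟨(i : ℕ) - 1, Nat.lt_of_le_of_lt (Nat.sub_le _ _) i.isLt⟩ else 0

/-- Reversal of a sequence. -/
def flipVec {L : ℕ} (x : Fin L → ℝ) : Fin L → ℝ := fun i => x i.rev

lemma Aprod_succ {N} (A : ℕ → Matrix (Fin N) (Fin N) ℝ) (i j : ℕ) (h : j ≤ i) :
    Aprod A (i+1) j = A (i+1) * Aprod A i j := by
  rw [Aprod, if_pos h]

lemma Aprod_self {N} (A : ℕ → Matrix (Fin N) (Fin N) ℝ) (p : ℕ) : Aprod A p p = 1 := by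
  cases p with
  | zero => rfl
  | succ s => rw [Aprod, if_neg (by omega)]

lemma Aprod_peel {N} (A : ℕ → Matrix (Fin N) (Fin N) ℝ) :
    ∀ p q, q + 1 ≤ p → Aprod A p q = Aprod A p (q+1) * A (q+1) := by
  intro p
  induction p with
  | zero => intro q h; omega
  | succ s ih =>
    intro q h
    rcases Nat.lt_or_ge (q+1) (s+1) with h1 | h1
    · rw [Aprod_succ A s q (by omega), Aprod_succ A s (q+1) (by omega), ih q (by omega),
        mul_assoc]
    · have : q = s := by omega
      subst this
      rw [Aprod_succ A q q le_rfl, Aprod_self, Aprod_self, one_mul, mul_one]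

lemma Aprod_rev {N} (B : ℕ → Matrix (Fin N) (Fin N) ℝ) (K : ℕ) :
    ∀ i j, j ≤ i → i < K →
      Aprod (fun t => (B (K - t))ᵀ) i j = (Aprod B (K-1-j) (K-1-i))ᵀ := by
  intro i
  induction i with
  | zero =>
    intro j hj _
    interval_cases j
    rw [Aprod_self, Aprod_self, transpose_one]
  | succ s ih =>
    intro j hj hK
    rcases Nat.lt_or_ge j (s+1) with h1 | h1
    · rw [Aprod_succ _ s j (by omega), ih j (by omega) (by omega)]
      have h2 : K - 1 - (s+1) + 1 = K - 1 - s := by omega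
      have e1 := Aprod_peel B (K-1-j) (K-1-(s+1)) (by omega)
      rw [h2] at e1
      rw [e1, transpose_mul]
      have h3 : K - (s+1) = K - 1 - s := by omega
      simp only [h3]
    · have : j = s+1 := by omega
      subst this
      rw [Aprod_self, Aprod_self, transpose_one]

lemma shiftM_mul_apply {L : ℕ} (X : Matrix (Fin L) (Fin L) ℝ) (i j : Fin L) :
    (shiftM L * X) i j =
      if 0 < (i : ℕ) then
        X ⟨(i : ℕ) - 1, Nat.lt_of_le_of_lt (Nat.sub_le _ _) i.isLt⟩ j else 0 := by
  rw [mul_apply]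
  split
  · rw [Finset.sum_eq_single (⟨(i : ℕ) - 1, Nat.lt_of_le_of_lt (Nat.sub_le _ _) i.isLt⟩ : Fin L)]
    · simp only [shiftM, of_apply]
      rw [if_pos (by omega), one_mul]
    · intro k _ hk
      simp only [shiftM, of_apply]
      rw [if_neg, zero_mul]
      intro hik
      apply hk
      apply Fin.ext
      simp
      omega
    · intro h; exact absurd (Finset.mem_univ _) h
  · apply Finset.sum_eq_zero
    intro k _
    simp only [shiftM, of_apply]
    rw [if_neg (by omega), zero_mul]

lemma shiftM_mulVec {L : ℕ} (x : Fin L → ℝ) : shiftM L *ᵥ x = shiftVec x := by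
  funext i
  rw [mulVec, dotProduct]
  unfold shiftVec
  split
  · rw [Finset.sum_eq_single (⟨(i : ℕ) - 1, Nat.lt_of_le_of_lt (Nat.sub_le _ _) i.isLt⟩ : Fin L)]
    · simp only [shiftM, of_apply]
      rw [if_pos (by omega), one_mul]
    · intro k _ hk
      simp only [shiftM, of_apply]
      rw [if_neg, zero_mul]
      intro hik
      apply hk
      apply Fin.ext
      simp
      omega
    · intro h; exact absurd (Finset.mem_univ _) h
  · apply Finset.sum_eq_zero
    intro k _
    simp only [shiftM, of_apply]
    rw [if_neg (by omega), zero_mul]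

lemma exchJ_mul_apply {L : ℕ} (X : Matrix (Fin L) (Fin L) ℝ) (i j : Fin L) :
    (exchJ L * X) i j = X i.rev j := by
  rw [mul_apply]
  rw [Finset.sum_eq_single i.rev]
  · simp only [exchJ, of_apply]
    rw [if_pos (by rw [Fin.val_rev]; omega), one_mul]
  · intro k _ hk
    simp only [exchJ, of_apply]
    rw [if_neg, zero_mul]
    intro hik
    apply hk
    apply Fin.ext
    rw [Fin.val_rev]
    omega
  · intro h; exact absurd (Finset.mem_univ _) h

lemma mul_exchJ_apply {L : ℕ} (X : Matrix (Fin L) (Fin L) ℝ) (i j : Fin L) :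
    (X * exchJ L) i j = X i j.rev := by
  rw [mul_apply]
  rw [Finset.sum_eq_single j.rev]
  · simp only [exchJ, of_apply]
    rw [if_pos (by rw [Fin.val_rev]; omega), mul_one]
  · intro k _ hk
    simp only [exchJ, of_apply]
    rw [if_neg, mul_zero]
    intro hik
    apply hk
    apply Fin.ext
    rw [Fin.val_rev]
    omega
  · intro h; exact absurd (Finset.mem_univ _) h

lemma exchJ_mulVec {L : ℕ} (x : Fin L → ℝ) : exchJ L *ᵥ x = flipVec x := by
  funext i
  rw [mulVec, dotProduct]
  rw [Finset.sum_eq_single i.rev]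
  · simp only [exchJ, of_apply, flipVec]
    rw [if_pos (by rw [Fin.val_rev]; omega), one_mul]
  · intro k _ hk
    simp only [exchJ, of_apply]
    rw [if_neg, zero_mul]
    intro hik
    apply hk
    apply Fin.ext
    rw [Fin.val_rev]
    omega
  · intro h; exact absurd (Finset.mem_univ _) h

/-- The action of a parametric `N`-quasiseparable matrix decomposes into
two semiseparable (state space) passes, one forward and one on the reversed sequence,
combined with shifts, flips, and the diagonal term:
`M = Shift * S_f + J * Shift * S_b * J + D`, i.e.
`M x = shift (S_f x) + flip (shift (S_b (flip x))) + D x` for all `x`. -/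
theorem quasisep_eq_two_semisep_passes {L N : ℕ}
    (Af : ℕ → Matrix (Fin N) (Fin N) ℝ) (bf cf : ℕ → Fin N → ℝ)
    (Ab : ℕ → Matrix (Fin N) (Fin N) ℝ) (bb cb : ℕ → Fin N → ℝ) (δ : ℕ → ℝ) :
    ∃ (A' : ℕ → Matrix (Fin N) (Fin N) ℝ) (b' c' : ℕ → Fin N → ℝ)
      (A'' : ℕ → Matrix (Fin N) (Fin N) ℝ) (b'' c'' : ℕ → Fin N → ℝ),
      quasisep L Af bf cf Ab bb cb δ =
        shiftM L * semisep L A' b' c' +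
          exchJ L * (shiftM L * (semisep L A'' b'' c'' * exchJ L)) +
          Matrix.diagonal (fun i : Fin L => δ (i : ℕ)) ∧
      ∀ x : Fin L → ℝ,
        quasisep L Af bf cf Ab bb cb δ *ᵥ x =
          shiftVec (semisep L A' b' c' *ᵥ x) +
            flipVec (shiftVec (semisep L A'' b'' c'' *ᵥ flipVec x)) +
            fun i : Fin L => δ (i : ℕ) * x i := by
  set A' : ℕ → Matrix (Fin N) (Fin N) ℝ := Af with hA'
  set b' : ℕ → Fin N → ℝ := bf with hb'
  set c' : ℕ → Fin N → ℝ := fun t => (Af (t+1))ᵀ *ᵥ cf (t+1) with hc'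
  set A'' : ℕ → Matrix (Fin N) (Fin N) ℝ := fun t => (Ab (L-1-t))ᵀ with hA''
  set b'' : ℕ → Fin N → ℝ := fun t => (Ab (L-1-t))ᵀ *ᵥ cb (L-1-t) with hb''
  set c'' : ℕ → Fin N → ℝ := fun t => bb (L-2-t) with hc''
  have hM : quasisep L Af bf cf Ab bb cb δ =
      shiftM L * semisep L A' b' c' +
        exchJ L * (shiftM L * (semisep L A'' b'' c'' * exchJ L)) +
        Matrix.diagonal (fun i : Fin L => δ (i : ℕ)) := by
    ext i j
    have hiL : (i : ℕ) < L := i.isLt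
    have hjL : (j : ℕ) < L := j.isLt
    rw [Matrix.add_apply, Matrix.add_apply, shiftM_mul_apply, exchJ_mul_apply, shiftM_mul_apply,
      mul_exchJ_apply]
    simp only [quasisep, semisep, of_apply, diagonal_apply, Fin.val_rev, Fin.ext_iff]
    have hfwd : (j:ℕ) < (i:ℕ) →
        cf (i:ℕ) ⬝ᵥ Aprod Af (i:ℕ) (j:ℕ) *ᵥ bf (j:ℕ) =
          c' ((i:ℕ) - 1) ⬝ᵥ Aprod A' ((i:ℕ) - 1) (j:ℕ) *ᵥ b' (j:ℕ) := by
      intro hji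
      have h1 : (i:ℕ) - 1 + 1 = (i:ℕ) := by omega
      simp only [hc', hA', hb']
      conv_lhs => rw [← h1, Aprod_succ Af ((i:ℕ)-1) (j:ℕ) (by omega)]
      rw [mulVec_transpose, ← dotProduct_mulVec, mulVec_mulVec]
    have hbwd : (i:ℕ) < (j:ℕ) →
        cb (j:ℕ) ⬝ᵥ Aprod Ab (j:ℕ) (i:ℕ) *ᵥ bb (i:ℕ) =
          c'' (L - ((i:ℕ)+1) - 1) ⬝ᵥ
            Aprod A'' (L - ((i:ℕ)+1) - 1) (L - ((j:ℕ)+1)) *ᵥ b'' (L - ((j:ℕ)+1)) := by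
      intro hij
      simp only [hc'', hA'', hb'']
      have e2 : L - 2 - (L - ((i:ℕ)+1) - 1) = (i:ℕ) := by omega
      have e3 : L - 1 - (L - ((j:ℕ)+1)) = (j:ℕ) := by omega
      rw [e2, e3, Aprod_rev Ab (L-1) (L - ((i:ℕ)+1) - 1) (L - ((j:ℕ)+1)) (by omega) (by omega)]
      have e4 : L - 1 - 1 - (L - ((j:ℕ)+1)) = (j:ℕ) - 1 := by omega
      have e5 : L - 1 - 1 - (L - ((i:ℕ)+1) - 1) = (i:ℕ) := by omega
      have e6 : (j:ℕ) - 1 + 1 = (j:ℕ) := by omega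
      have e7 : Aprod Ab (j:ℕ) (i:ℕ) = Ab (j:ℕ) * Aprod Ab ((j:ℕ)-1) (i:ℕ) := by
        have h := Aprod_succ Ab ((j:ℕ)-1) (i:ℕ) (by omega)
        rw [e6] at h
        exact h
      rw [e4, e5, mulVec_mulVec, ← transpose_mul, ← e7, mulVec_transpose,
        dotProduct_comm (bb (i:ℕ)), dotProduct_mulVec]
    split_ifs <;>
      first
        | omega
        | (rw [hfwd (by omega)]; ring)
        | (rw [hbwd (by omega)]; ring)
        | ring
  refine ⟨A', b', c', A'', b'', c'', hM, ?_⟩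
  intro x
  rw [hM, add_mulVec, add_mulVec, ← mulVec_mulVec, shiftM_mulVec,
    ← mulVec_mulVec, ← mulVec_mulVec, ← mulVec_mulVec, exchJ_mulVec, shiftM_mulVec,
    exchJ_mulVec]
  congr 1
  funext k
  simp [mulVec_diagonal]
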